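/- arXiv:1310.8564 — 3 statements merged into one kernel-verified Lean document; each statement's English description precedes it below -/
import Mathlib

section
/- Let d ≥ 1 and let p ∈ ℂ[z₁^{±1},…,z_d^{±1}] be a non-zero Laurent polynomial with wd(p) ≥ 1. Then for all λ ≥ 0 one has μ_{T^d}({z ∈ T^d : |p(z)| ≤ λ}) ≤ (8·√3/√47) · d · wd(p) · ( λ / |lead(p)| )^{1/(d·wd(p))}. -/
open MeasureTheory Real Filter

noncomputable section

/-- `Laur d` is the Laurent polynomial ring `ℂ[ℤ^d] = ℂ[z₁^{±1},…,z_d^{±1}]`,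
realized as the group algebra of `ℤ^d` over `ℂ`. -/
abbrev Laur (d : ℕ) : Type := AddMonoidAlgebra ℂ (Fin d → ℤ)

/-- the coefficient of `z₁^{n₁}⋯z_d^{n_d}` in `p` -/
def coeff {d : ℕ} (p : Laur d) (n : Fin d → ℤ) : ℂ := (AddMonoidAlgebra.coeff p : (Fin d → ℤ) →₀ ℂ) n

/-- the top degree `n⁺` of `p` in the last variable `z_{d}` -/
def topDeg {d : ℕ} (p : Laur (d+1)) : ℤ :=
  sSup ((fun n : Fin (d+1) → ℤ => n (Fin.last d)) ''
    ((Finsupp.support (AddMonoidAlgebra.coeff p) : Finset (Fin (d+1) → ℤ)) : Set (Fin (d+1) → ℤ)))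

/-- the bottom degree `n⁻` of `p` in the last variable `z_{d}` -/
def botDeg {d : ℕ} (p : Laur (d+1)) : ℤ :=
  sInf ((fun n : Fin (d+1) → ℤ => n (Fin.last d)) ''
    ((Finsupp.support (AddMonoidAlgebra.coeff p) : Finset (Fin (d+1) → ℤ)) : Set (Fin (d+1) → ℤ)))

/-- the coefficient `q⁺(p) = q_{n⁺}` of the top power of the last variable:
a Laurent polynomial in one variable fewer -/
def qplus {d : ℕ} (p : Laur (d+1)) : Laur d :=
  AddMonoidAlgebra.ofCoeff (Finsupp.comapDomain (fun n : Fin d → ℤ => Fin.snoc n (topDeg p)) (AddMonoidAlgebra.coeff p)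
    (fun a _ b _ h => funext fun i => by simpa using congrFun h (Fin.castSucc i)))

/-- the leading coefficient `lead(p) = p_d`, obtained by iterating `q⁺` -/
def lead : {d : ℕ} → Laur d → ℂ
  | 0, p => coeff p 0
  | _+1, p => lead (qplus p)

/-- the width `wd(p) = max{w₀(p),…,w_{d-1}(p)}` where `w_i(p) = w(p_i)` and
`p_i = q⁺(p_{i-1})` -/
def wd : {d : ℕ} → Laur d → ℤ
  | 0, _ => 0
  | _+1, p => max (topDeg p - botDeg p) (wd (qplus p))

/-- evaluation of a Laurent polynomial at a point of `(ℂ^×)^d` -/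
def evalL {d : ℕ} (p : Laur d) (z : Fin d → ℂ) : ℂ :=
  Finsupp.sum (AddMonoidAlgebra.coeff p) fun n a => a * ∏ i, z i ^ n i

/-- the normalized Haar measure on the unit circle `S¹ ⊆ ℂ`, as a measure on `ℂ` -/
def circleMeasure : Measure ℂ :=
  Measure.map (fun x : ℝ => Complex.exp (2 * Real.pi * Complex.I * x))
    (volume.restrict (Set.Ioc (0:ℝ) 1))

instance : IsProbabilityMeasure circleMeasure := by
  have h1 : IsProbabilityMeasure (volume.restrict (Set.Ioc (0:ℝ) 1)) := by
    constructor
    simp [Real.volume_Ioc]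
  exact Measure.isProbabilityMeasure_map
    ((Complex.continuous_exp.comp (continuous_const.mul Complex.continuous_ofReal)).aemeasurable)

/-- the normalized Haar measure on the `d`-torus `T^d`, as a measure on `ℂ^d` -/
def torusMeasure (d : ℕ) : Measure (Fin d → ℂ) := Measure.pi fun _ => circleMeasure

/-- entrywise evaluation of a matrix over `ℂ[ℤ^d]` at a point of the torus -/
def evalMatrix {d m n : ℕ} (A : Matrix (Fin m) (Fin n) (Laur d)) (z : Fin d → ℂ) :
    Matrix (Fin m) (Fin n) ℂ := fun i j => evalL (A i j) z

/-- the spectral density function of `r_A^{(2)} : L²(ℤ^d)^m → L²(ℤ^d)^n`: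
`F_A(λ) = ∫_{T^d} #{i : μ_i(z) ≤ λ²} dμ_{T^d}(z)` where `μ₁(z),…,μ_m(z)` are the
eigenvalues of the positive semidefinite Hermitian matrix `A(z)·A(z)^*` -/
def sdf {d m n : ℕ} (A : Matrix (Fin m) (Fin n) (Laur d)) (lam : ℝ) : ℝ :=
  ∫ z, ((Finset.univ.filter fun i : Fin m =>
      (Matrix.isHermitian_mul_conjTranspose_self (evalMatrix A z)).eigenvalues i ≤ lam ^ 2).card : ℝ)
    ∂ torusMeasure d

/-- the `L¹`-norm `‖p‖₁` of a Laurent polynomial -/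
def norm1 {d : ℕ} (p : Laur d) : ℝ := Finsupp.sum (AddMonoidAlgebra.coeff p) fun _ a => ‖a‖

/-- the `L¹`-norm `‖A‖₁` of a matrix over `ℂ[ℤ^d]`: the maximum of the `L¹`-norms
of its entries -/
def norm1M {d m n : ℕ} (A : Matrix (Fin m) (Fin n) (Laur d)) : ℝ := ⨆ i, ⨆ j, norm1 (A i j)

def Complex.abs : AbsoluteValue ℂ ℝ := IsAbsoluteValue.toAbsoluteValue (‖·‖ : ℂ → ℝ)

@[simp] lemma Complex.abs_apply (z : ℂ) : Complex.abs z = ‖z‖ := rfl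

lemma Complex.abs_exp (z : ℂ) : Complex.abs (Complex.exp z) = Real.exp z.re := Complex.norm_exp z

lemma Complex.abs_I : Complex.abs Complex.I = 1 := by simp

lemma Complex.abs_two : Complex.abs 2 = 2 := by simp

lemma Complex.abs_ofReal (r : ℝ) : Complex.abs r = |r| := by simp

@[continuity]
lemma Complex.continuous_abs : Continuous Complex.abs := continuous_norm

-- basic lemmas

section Deg
variable {d : ℕ} (p : Laur (d+1))

def degSet {d : ℕ} (p : Laur (d+1)) : Set ℤ :=
  ((fun n : Fin (d+1) → ℤ => n (Fin.last d)) ''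
    ((Finsupp.support (AddMonoidAlgebra.coeff p) : Finset (Fin (d+1) → ℤ)) : Set (Fin (d+1) → ℤ)))

lemma degSet_finite : (degSet p).Finite :=
  Set.Finite.image _ (Finset.finite_toSet _)

lemma degSet_nonempty (hp : p ≠ 0) : (degSet p).Nonempty := by
  refine Set.Nonempty.image _ ?_
  rw [Finset.coe_nonempty, Finsupp.support_nonempty_iff]
  exact mt AddMonoidAlgebra.coeff_eq_zero.1 hp

lemma exists_topDeg (hp : p ≠ 0) : ∃ n ∈ p.coeff.support, n (Fin.last d) = topDeg p := by
  have h := Set.Nonempty.csSup_mem (degSet_nonempty p hp) (degSet_finite p)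
  obtain ⟨n, hn, hn'⟩ := h
  exact ⟨n, hn, hn'⟩

lemma le_topDeg {n : Fin (d+1) → ℤ} (hn : n ∈ p.coeff.support) : n (Fin.last d) ≤ topDeg p :=
  le_csSup ((degSet_finite p).bddAbove) ⟨n, hn, rfl⟩

lemma botDeg_le {n : Fin (d+1) → ℤ} (hn : n ∈ p.coeff.support) : botDeg p ≤ n (Fin.last d) :=
  csInf_le ((degSet_finite p).bddBelow) ⟨n, hn, rfl⟩

lemma botDeg_le_topDeg (hp : p ≠ 0) : botDeg p ≤ topDeg p := by
  obtain ⟨n, hn, hn'⟩ := exists_topDeg p hp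
  exact (botDeg_le p hn).trans hn'.le

lemma qplus_apply (m : Fin d → ℤ) : (qplus p).coeff m = p.coeff (Fin.snoc m (topDeg p)) := rfl

lemma qplus_ne_zero (hp : p ≠ 0) : qplus p ≠ 0 := by
  obtain ⟨n, hn, hn'⟩ := exists_topDeg p hp
  have hsn : Fin.snoc (Fin.init n) (topDeg p) = n := by
    rw [← hn']; exact Fin.snoc_init_self n
  intro h
  apply Finsupp.mem_support_iff.1 hn
  have := Finsupp.ext_iff.1 (congrArg AddMonoidAlgebra.coeff h : (qplus p).coeff = 0) (Fin.init n)
  simpa [qplus_apply, hsn] using this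

lemma lead_succ : lead p = lead (qplus p) := rfl

lemma lead_ne_zero : ∀ {d : ℕ} (p : Laur d), p ≠ 0 → lead p ≠ 0 := by
  intro d
  induction d with
  | zero =>
    intro p hp
    obtain ⟨n, hn⟩ := Finsupp.support_nonempty_iff.2 (mt AddMonoidAlgebra.coeff_eq_zero.1 hp)
    have hn0 : n = 0 := Subsingleton.elim _ _
    simpa [lead, coeff, hn0] using Finsupp.mem_support_iff.1 hn
  | succ d ih =>
    intro p hp
    exact ih (qplus p) (qplus_ne_zero p hp)

lemma topDeg_sub_botDeg_le_wd : topDeg p - botDeg p ≤ wd p := le_max_left _ _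

lemma wd_qplus_le : wd (qplus p) ≤ wd p := le_max_right _ _

lemma wd_nonneg : ∀ {d : ℕ} (p : Laur d), p ≠ 0 → 0 ≤ wd p := by
  intro d
  induction d with
  | zero => intro p _; simp [wd]
  | succ d ih =>
    intro p hp
    exact le_trans (ih (qplus p) (qplus_ne_zero p hp)) (wd_qplus_le p)

end Deg


lemma circleMap_continuous : Continuous (fun x : ℝ => Complex.exp (2 * Real.pi * Complex.I * x)) :=
  Complex.continuous_exp.comp (continuous_const.mul Complex.continuous_ofReal)

-- |e(x) - e(y)| = 2 |sin (π (x-y))|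
lemma abs_e_sub_e (x y : ℝ) :
    Complex.abs (Complex.exp (2 * Real.pi * Complex.I * x) - Complex.exp (2 * Real.pi * Complex.I * y))
      = 2 * |Real.sin (Real.pi * (x - y))| := by
  have key : Complex.exp (2 * Real.pi * Complex.I * x) - Complex.exp (2 * Real.pi * Complex.I * y)
      = Complex.exp (Real.pi * (x + y) * Complex.I) *
        (Complex.exp ((Real.pi * (x - y) : ℝ) * Complex.I) -
         Complex.exp (-((Real.pi * (x - y) : ℝ)) * Complex.I)) := by
    rw [mul_sub, ← Complex.exp_add, ← Complex.exp_add]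
    push_cast
    ring_nf
  rw [key]
  set t : ℝ := Real.pi * (x - y) with ht
  have h2 : Complex.exp ((t : ℝ) * Complex.I) - Complex.exp (-(t:ℝ) * Complex.I)
      = 2 * Real.sin t * Complex.I := by
    rw [Complex.exp_mul_I, Complex.exp_mul_I]
    rw [Complex.cos_neg, Complex.sin_neg]
    rw [← Complex.ofReal_sin]
    ring
  rw [h2, map_mul, map_mul, map_mul, Complex.abs_exp, Complex.abs_I, Complex.abs_two]
  have : (Real.pi * (x + y) * Complex.I).re = 0 := by simp
  rw [this, Real.exp_zero, Complex.abs_ofReal]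
  ring

-- Jordan: |sin (π u)| ≤ s, s ≤ 1 → ∃ k:ℤ, |u - k| ≤ s/2
lemma dist_int_le_of_sin_le {u s : ℝ} (hs : 0 ≤ s) (h : |Real.sin (Real.pi * u)| ≤ s) :
    |u - round u| ≤ s / 2 := by
  set v : ℝ := u - round u with hv
  have hv2 : |v| ≤ 1/2 := by simpa using abs_sub_round u
  have hsin : |Real.sin (Real.pi * u)| = |Real.sin (Real.pi * v)| := by
    have : Real.pi * u = Real.pi * v + (round u : ℤ) * Real.pi := by push_cast; ring
    rw [this, Real.sin_add_int_mul_pi, abs_mul]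
    have h9 : |(-1:ℝ) ^ round u| = 1 := by
      rcases Int.even_or_odd (round u) with he | ho
      · rw [he.neg_one_zpow]; simp
      · rw [Odd.neg_one_zpow ho]; simp
    rw [h9, one_mul]
  have h2 : 2 * |v| ≤ |Real.sin (Real.pi * v)| := by
    have h3 : |Real.sin (Real.pi * v)| = Real.sin (Real.pi * |v|) := by
      rcases abs_cases v with ⟨h4, _⟩ | ⟨h4, h5⟩
      · rw [h4]; rw [abs_of_nonneg]
        apply Real.sin_nonneg_of_nonneg_of_le_pi
        · positivity
        · nlinarith [Real.pi_pos, hv2, abs_nonneg v, h4 ▸ hv2]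
      · rw [h4, mul_neg, Real.sin_neg]
        rw [abs_of_nonpos]
        apply Real.sin_nonpos_of_nonpos_of_neg_pi_le
        · nlinarith [Real.pi_pos]
        · nlinarith [Real.pi_pos, hv2, abs_nonneg v, neg_abs_le v]
    rw [h3]
    have := Real.mul_le_sin (x := Real.pi * |v|) (by positivity)
      (by nlinarith [Real.pi_pos, hv2])
    calc 2 * |v| = 2 / Real.pi * (Real.pi * |v|) := by
            field_simp
      _ ≤ Real.sin (Real.pi * |v|) := this
  rw [hsin] at h
  linarith [h2.trans h]

lemma circleMeasure_ball_le (a : ℂ) (ε : ℝ) (hε : 0 ≤ ε) :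
    circleMeasure {z | Complex.abs (z - a) ≤ ε} ≤ ENNReal.ofReal (2 * ε) := by
  set f : ℝ → ℂ := fun x : ℝ => Complex.exp (2 * Real.pi * Complex.I * x) with hf
  have hmf : Measurable f := circleMap_continuous.measurable
  have hms : MeasurableSet {z : ℂ | Complex.abs (z - a) ≤ ε} := by
    have : IsClosed {z : ℂ | Complex.abs (z - a) ≤ ε} :=
      isClosed_le (by continuity) continuous_const
    exact this.measurableSet
  rw [circleMeasure, Measure.map_apply hmf hms]
  rw [Measure.restrict_apply' measurableSet_Ioc]
  set T : Set ℝ := f ⁻¹' {z | Complex.abs (z - a) ≤ ε} with hT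
  rcases le_or_gt (1/2 : ℝ) ε with hcase | hcase
  · calc volume (T ∩ Set.Ioc 0 1) ≤ volume (Set.Ioc (0:ℝ) 1) :=
          measure_mono Set.inter_subset_right
    _ = ENNReal.ofReal 1 := by simp [Real.volume_Ioc]
    _ ≤ ENNReal.ofReal (2 * ε) := by
          apply ENNReal.ofReal_le_ofReal; linarith
  · rcases Set.eq_empty_or_nonempty (T ∩ Set.Ioc 0 1) with hemp | ⟨x₀, hx₀T, hx₀I⟩
    · rw [hemp]; simp
    · set δ : ℝ := ε / 2 with hδ
      have key : ∀ x ∈ T ∩ Set.Ioc 0 1,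
          x ∈ Set.Icc (x₀ - δ) (x₀ + δ) ∪ Set.Icc (x₀ + 1 - δ) 1 ∪ Set.Icc 0 (x₀ - 1 + δ) := by
        rintro x ⟨hxT, hxI⟩
        have hdist : Complex.abs (f x - f x₀) ≤ 2 * ε := by
          have h1 : Complex.abs (f x - a) ≤ ε := hxT
          have h2 : Complex.abs (f x₀ - a) ≤ ε := hx₀T
          calc Complex.abs (f x - f x₀) = Complex.abs ((f x - a) - (f x₀ - a)) := by ring_nf
          _ ≤ Complex.abs (f x - a) + Complex.abs (f x₀ - a) := by
              apply AbsoluteValue.sub_le_add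
          _ ≤ 2 * ε := by linarith
        rw [abs_e_sub_e] at hdist
        have hsin : |Real.sin (Real.pi * (x - x₀))| ≤ ε := by linarith
        have hround := dist_int_le_of_sin_le hε hsin
        set k : ℤ := round (x - x₀) with hk
        have hkabs : |(x - x₀) - k| ≤ δ := by rw [hδ]; exact hround
        have hxb : 0 < x ∧ x ≤ 1 := ⟨hxI.1, hxI.2⟩
        have hx0b : 0 < x₀ ∧ x₀ ≤ 1 := ⟨hx₀I.1, hx₀I.2⟩
        have hδlt : δ < 1/4 := by rw [hδ]; linarith
        have hkx : |(x:ℝ) - x₀| < 1 := by rw [abs_sub_lt_iff]; constructor <;> linarith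
        have h5 : |(k:ℝ)| < 3/2 := by
          have : |(k:ℝ)| ≤ |(x - x₀) - k| + |x - x₀| := by
            calc |(k:ℝ)| = |((k:ℝ) - (x - x₀)) + (x - x₀)| := by ring_nf
            _ ≤ |(k:ℝ) - (x - x₀)| + |x - x₀| := abs_add_le _ _
            _ = |(x - x₀) - k| + |x - x₀| := by rw [abs_sub_comm]
          linarith [hkabs]
        have hkrange : k = 0 ∨ k = 1 ∨ k = -1 := by
          have h6 : -(3/2:ℝ) < (k:ℝ) ∧ (k:ℝ) < 3/2 := abs_lt.1 h5
          have h7 : -2 < k ∧ k < 2 := by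
            constructor <;> [exact_mod_cast lt_of_lt_of_le (by linarith [h6.1] : (-2:ℝ) < k) (le_refl _); exact_mod_cast lt_of_le_of_lt (le_refl ((k:ℝ))) (by linarith [h6.2] : (k:ℝ) < 2)]
          omega
        rcases hkrange with hk0 | hk1 | hkm1
        · left; left
          rw [hk0] at hkabs
          simp only [Int.cast_zero, sub_zero] at hkabs
          rw [abs_le] at hkabs
          exact ⟨by linarith [hkabs.1], by linarith [hkabs.2]⟩
        · left; right
          rw [hk1] at hkabs
          rw [abs_le] at hkabs
          push_cast at hkabs
          exact ⟨by linarith [hkabs.1], by linarith⟩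
        · right
          rw [hkm1] at hkabs
          rw [abs_le] at hkabs
          push_cast at hkabs
          exact ⟨by linarith, by linarith [hkabs.2]⟩
      calc volume (T ∩ Set.Ioc 0 1)
          ≤ volume (Set.Icc (x₀ - δ) (x₀ + δ) ∪ Set.Icc (x₀ + 1 - δ) 1 ∪ Set.Icc 0 (x₀ - 1 + δ)) :=
            measure_mono key
        _ ≤ volume (Set.Icc (x₀ - δ) (x₀ + δ)) + volume (Set.Icc (x₀ + 1 - δ) 1)
              + volume (Set.Icc 0 (x₀ - 1 + δ)) := by
            refine le_trans (measure_union_le _ _) ?_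
            exact add_le_add (measure_union_le _ _) le_rfl
        _ ≤ ENNReal.ofReal (2 * δ) + ENNReal.ofReal δ + ENNReal.ofReal δ := by
            gcongr
            · rw [Real.volume_Icc]; apply ENNReal.ofReal_le_ofReal; linarith
            · rw [Real.volume_Icc]; apply ENNReal.ofReal_le_ofReal; linarith [hx₀I.1]
            · rw [Real.volume_Icc]; apply ENNReal.ofReal_le_ofReal; linarith [hx₀I.2]
        _ = ENNReal.ofReal (2 * ε) := by
            rw [← ENNReal.ofReal_add (by positivity) (by positivity),
              ← ENNReal.ofReal_add (by positivity) (by positivity)]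
            congr 1; rw [hδ]; ring

-- Part 4: fiber polynomial and Fubini
section Fiber
variable {d : ℕ}

def fiberPoly (p : Laur (d+1)) (z' : Fin d → ℂ) : Polynomial ℂ :=
  p.coeff.support.sum fun n => Polynomial.C (p.coeff n * ∏ i : Fin d, z' i ^ n (Fin.castSucc i)) *
    Polynomial.X ^ (n (Fin.last d) - botDeg p).toNat

lemma evalL_snoc (p : Laur (d+1)) (z' : Fin d → ℂ) (z : ℂ) (hz : z ≠ 0) :
    evalL p (Fin.snoc z' z) = z ^ (botDeg p) * Polynomial.eval z (fiberPoly p z') := by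
  rw [fiberPoly, Polynomial.eval_finset_sum, Finset.mul_sum, evalL, Finsupp.sum]
  apply Finset.sum_congr rfl
  intro n hn
  rw [Polynomial.eval_mul, Polynomial.eval_C, Polynomial.eval_pow, Polynomial.eval_X]
  rw [Fin.prod_univ_castSucc]
  simp only [Fin.snoc_castSucc, Fin.snoc_last]
  have h1 : (z : ℂ) ^ (n (Fin.last d)) = z ^ (botDeg p) * z ^ ((n (Fin.last d) - botDeg p).toNat) := by
    rw [← zpow_natCast z ((n (Fin.last d) - botDeg p).toNat),
      Int.toNat_of_nonneg (sub_nonneg.2 (botDeg_le p hn)), ← zpow_add₀ hz]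
    congr 1
    ring
  rw [h1]
  ring

lemma fiberPoly_coeff_top (p : Laur (d+1)) (z' : Fin d → ℂ) :
    (fiberPoly p z').coeff ((topDeg p - botDeg p).toNat) = evalL (qplus p) z' := by
  classical
  rw [fiberPoly, Polynomial.finset_sum_coeff]
  rw [Finset.sum_congr rfl (fun n _ => by
    rw [Polynomial.coeff_C_mul, Polynomial.coeff_X_pow])]
  rw [evalL, Finsupp.sum]
  have hterm : ∀ n ∈ p.coeff.support,
      ((p.coeff n * ∏ i : Fin d, z' i ^ n (Fin.castSucc i)) *
        if (topDeg p - botDeg p).toNat = (n (Fin.last d) - botDeg p).toNat then 1 else 0)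
      = if n (Fin.last d) = topDeg p then (p.coeff n * ∏ i : Fin d, z' i ^ n (Fin.castSucc i)) else 0 := by
    intro n hn
    have h1 := botDeg_le p hn
    have h2 := le_topDeg p hn
    by_cases hcond : n (Fin.last d) = topDeg p
    · rw [if_pos hcond, if_pos (by omega), mul_one]
    · rw [if_neg hcond, if_neg (by omega), mul_zero]
  rw [Finset.sum_congr rfl hterm, ← Finset.sum_filter]
  refine Finset.sum_nbij' (i := fun n => Fin.init n) (j := fun m => Fin.snoc m (topDeg p))
    ?_ ?_ ?_ ?_ ?_
  · intro n hn
    simp only [Finset.mem_filter] at hn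
    obtain ⟨hn1, hn2⟩ := hn
    rw [Finsupp.mem_support_iff, qplus_apply]
    have : Fin.snoc (Fin.init n) (topDeg p) = n := by rw [← hn2]; exact Fin.snoc_init_self n
    rw [this]
    congr 1
    exact Finsupp.mem_support_iff.1 hn1
  · intro m hm
    simp only [Finset.mem_filter]
    constructor
    · rw [Finsupp.mem_support_iff]
      rw [← qplus_apply]
      exact Finsupp.mem_support_iff.1 hm
    · simp
  · intro n hn
    simp only [Finset.mem_filter] at hn
    rw [← hn.2]
    exact Fin.snoc_init_self n
  · intro m _
    exact Fin.init_snoc _ _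
  · intro n hn
    simp only [Finset.mem_filter] at hn
    rw [qplus_apply]
    have : Fin.snoc (Fin.init n) (topDeg p) = n := by rw [← hn.2]; exact Fin.snoc_init_self n
    rw [this]
    congr 1

lemma fiberPoly_natDegree_le (p : Laur (d+1)) (z' : Fin d → ℂ) :
    (fiberPoly p z').natDegree ≤ (topDeg p - botDeg p).toNat := by
  apply Polynomial.natDegree_sum_le_of_forall_le
  intro n hn
  refine le_trans (Polynomial.natDegree_C_mul_le _ _) ?_
  rw [Polynomial.natDegree_X_pow]
  have h1 := botDeg_le p hn
  have h2 := le_topDeg p hn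
  omega

lemma measurable_evalL (p : Laur d) : Measurable (fun z : (Fin d → ℂ) => evalL p z) := by
  have : (fun z : (Fin d → ℂ) => evalL p z)
      = fun z => ∑ n ∈ p.coeff.support, p.coeff n * ∏ i, z i ^ n i := by
    funext z; rw [evalL, Finsupp.sum]
  rw [this]
  apply Finset.measurable_sum
  intro n _
  apply Measurable.const_mul
  apply Finset.measurable_prod
  intro i _
  exact (measurable_pi_apply i).pow_const _
end Fiber


instance (d : ℕ) : IsProbabilityMeasure (torusMeasure d) := by
  rw [torusMeasure]; infer_instance

lemma torus_succ_apply {d : ℕ} (S : Set (Fin (d+1) → ℂ)) (hS : MeasurableSet S) :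
    torusMeasure (d+1) S = ∫⁻ z', circleMeasure {z | Fin.snoc z' z ∈ S} ∂ torusMeasure d := by
  have hmp := measurePreserving_piFinSuccAbove (fun _ : Fin (d+1) => circleMeasure) (Fin.last d)
  set e := MeasurableEquiv.piFinSuccAbove (fun _ : Fin (d+1) => ℂ) (Fin.last d) with he
  have hsnoc : Measurable (fun q : ℂ × (Fin d → ℂ) => (Fin.snoc q.2 q.1 : Fin (d+1) → ℂ)) := by
    apply measurable_pi_lambda
    intro i
    refine Fin.lastCases ?_ ?_ i
    · simpa using measurable_fst
    · intro j
      simp only [Fin.snoc_castSucc]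
      exact (measurable_pi_apply j).comp measurable_snd
  set T : Set (ℂ × (Fin d → ℂ)) := (fun q : ℂ × (Fin d → ℂ) => (Fin.snoc q.2 q.1 : Fin (d+1) → ℂ)) ⁻¹' S with hT
  have hTm : MeasurableSet T := hsnoc hS
  have hpre : e ⁻¹' T = S := by
    ext w
    simp only [Set.mem_preimage, hT, he]
    constructor
    · intro h
      convert h using 2
      funext i
      refine Fin.lastCases ?_ ?_ i
      · simp [MeasurableEquiv.piFinSuccAbove]
      · intro j
        simp [MeasurableEquiv.piFinSuccAbove, Fin.snoc_castSucc, Fin.init]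
    · intro h
      convert h using 2
      funext i
      refine Fin.lastCases ?_ ?_ i
      · simp [MeasurableEquiv.piFinSuccAbove]
      · intro j
        simp [MeasurableEquiv.piFinSuccAbove, Fin.snoc_castSucc, Fin.init]
  calc torusMeasure (d+1) S = (Measure.pi fun _ : Fin (d+1) => circleMeasure) (e ⁻¹' T) := by
        rw [hpre]; rfl
    _ = (circleMeasure.prod (Measure.pi fun _ : Fin d => circleMeasure)) T :=
        hmp.measure_preimage hTm.nullMeasurableSet
    _ = ∫⁻ z', circleMeasure {z | Fin.snoc z' z ∈ S} ∂ torusMeasure d := by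
        rw [Measure.prod_apply_symm hTm]
        rfl

section OneVar

-- product of reals each ≥ a ≥ 0
lemma pow_card_le_multiset_prod (m : Multiset ℝ) (a : ℝ) (ha : 0 ≤ a)
    (h : ∀ x ∈ m, a ≤ x) : a ^ Multiset.card m ≤ m.prod := by
  induction m using Multiset.induction_on with
  | empty => simp
  | cons x m ih =>
    rw [Multiset.prod_cons, Multiset.card_cons, pow_succ, mul_comm (a ^ Multiset.card m) a]
    have hx : a ≤ x := h x (Multiset.mem_cons_self x m)
    have hm : ∀ y ∈ m, a ≤ y := fun y hy => h y (Multiset.mem_cons_of_mem hy)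
    have h1 : a ^ Multiset.card m ≤ m.prod := ih hm
    have h2 : (0:ℝ) ≤ a ^ Multiset.card m := pow_nonneg ha _
    exact mul_le_mul hx h1 h2 (le_trans ha hx)

lemma exists_mem_le_rpow (m : Multiset ℂ) (hm : m ≠ 0) (z : ℂ) (E : ℝ) (hE : 0 ≤ E)
    (h : (m.map fun r => Complex.abs (z - r)).prod ≤ E) :
    ∃ r ∈ m, Complex.abs (z - r) ≤ E ^ ((Multiset.card m : ℝ)⁻¹) := by
  have hfin : m.toFinset.Nonempty := by
    rw [Multiset.toFinset_nonempty]; exact hm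
  obtain ⟨r₀, hr₀mem, hr₀min⟩ := m.toFinset.exists_min_image (fun r => Complex.abs (z - r)) hfin
  have hr₀m : r₀ ∈ m := Multiset.mem_toFinset.1 hr₀mem
  refine ⟨r₀, hr₀m, ?_⟩
  set a : ℝ := Complex.abs (z - r₀) with ha
  have ha0 : 0 ≤ a := AbsoluteValue.nonneg _ _
  have hcard : a ^ Multiset.card m ≤ E := by
    refine le_trans ?_ h
    have : Multiset.card m = Multiset.card (m.map fun r => Complex.abs (z - r)) := by simp
    rw [this]
    apply pow_card_le_multiset_prod _ _ ha0
    intro x hx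
    obtain ⟨r, hr, rfl⟩ := Multiset.mem_map.1 hx
    exact hr₀min r (Multiset.mem_toFinset.2 hr)
  have hcard0 : Multiset.card m ≠ 0 := by
    simpa [Multiset.card_eq_zero] using hm
  calc a = (a ^ Multiset.card m) ^ ((Multiset.card m : ℝ)⁻¹) := by
        rw [← Real.rpow_natCast a, ← Real.rpow_mul ha0]
        rw [mul_inv_cancel₀ (by exact_mod_cast hcard0), Real.rpow_one]
    _ ≤ E ^ ((Multiset.card m : ℝ)⁻¹) := by
        apply Real.rpow_le_rpow (by positivity) hcard (by positivity)

lemma onevar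
    (P : Polynomial ℂ) (hP : P ≠ 0) (hdeg : 1 ≤ P.natDegree) (lam : ℝ) (hlam : 0 ≤ lam) :
    circleMeasure {z | Complex.abs (Polynomial.eval z P) ≤ lam} ≤
      ENNReal.ofReal (2 * P.natDegree * (lam / Complex.abs P.leadingCoeff) ^ ((P.natDegree : ℝ)⁻¹)) := by
  set n : ℕ := P.natDegree with hn
  set c : ℂ := P.leadingCoeff with hc
  have hc0 : c ≠ 0 := Polynomial.leadingCoeff_ne_zero.2 hP
  have hcabs : 0 < Complex.abs c := by simpa using hc0
  set m : Multiset ℂ := P.roots with hm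
  have hsplits : P.Splits := IsAlgClosed.splits P
  have hcardm : Multiset.card m = n := by
    have h := hsplits.natDegree_eq_card_roots
    rw [hm, hn, h]
  have hm0 : m ≠ 0 := by
    intro h
    rw [h] at hcardm
    simp at hcardm
    omega
  have hfact : ∀ z : ℂ, Complex.abs (Polynomial.eval z P)
      = Complex.abs c * (m.map fun r => Complex.abs (z - r)).prod := by
    intro z
    conv_lhs => rw [hsplits.eq_prod_roots]
    rw [Polynomial.eval_mul, Polynomial.eval_C, map_mul]
    congr 1
    rw [Polynomial.eval_multiset_prod, map_multiset_prod Complex.abs, Multiset.map_map,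
      Multiset.map_map]
    congr 1
    apply Multiset.map_congr rfl
    intro r _
    simp
  set E : ℝ := lam / Complex.abs c with hE
  have hE0 : 0 ≤ E := by positivity
  set ε : ℝ := E ^ ((n : ℝ)⁻¹) with hε
  have hε0 : 0 ≤ ε := Real.rpow_nonneg hE0 _
  have hsub : {z : ℂ | Complex.abs (Polynomial.eval z P) ≤ lam} ⊆
      ⋃ r ∈ m.toFinset, {z : ℂ | Complex.abs (z - r) ≤ ε} := by
    intro z hz
    simp only [Set.mem_setOf_eq] at hz
    rw [hfact z] at hz
    have hprod : (m.map fun r => Complex.abs (z - r)).prod ≤ E := by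
      rw [hE, le_div_iff₀ hcabs, mul_comm]
      exact hz
    obtain ⟨r, hr, hrle⟩ := exists_mem_le_rpow m hm0 z E hE0 hprod
    refine Set.mem_biUnion (Multiset.mem_toFinset.2 hr) ?_
    rw [hcardm] at hrle
    exact hrle
  calc circleMeasure {z : ℂ | Complex.abs (Polynomial.eval z P) ≤ lam}
      ≤ circleMeasure (⋃ r ∈ m.toFinset, {z : ℂ | Complex.abs (z - r) ≤ ε}) := measure_mono hsub
    _ ≤ ∑ r ∈ m.toFinset, circleMeasure {z : ℂ | Complex.abs (z - r) ≤ ε} :=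
        measure_biUnion_finset_le _ _
    _ ≤ ∑ _r ∈ m.toFinset, ENNReal.ofReal (2 * ε) := by
        apply Finset.sum_le_sum
        intro r _
        exact circleMeasure_ball_le r ε hε0
    _ = m.toFinset.card * ENNReal.ofReal (2 * ε) := by
        rw [Finset.sum_const, nsmul_eq_mul]
    _ ≤ n * ENNReal.ofReal (2 * ε) := by
        gcongr
        · exact_mod_cast le_refl _ |>.trans (by exact_mod_cast (hcardm ▸ Multiset.toFinset_card_le m : m.toFinset.card ≤ n))
    _ = ENNReal.ofReal (2 * n * ε) := by
        rw [← ENNReal.ofReal_natCast n, ← ENNReal.ofReal_mul (by positivity)]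
        congr 1
        ring
end OneVar

section MainProof

lemma evalL_zero_dim (p : Laur 0) (z : Fin 0 → ℂ) : evalL p z = coeff p 0 := by
  have hp : p = AddMonoidAlgebra.single 0 (coeff p 0) := by
    apply AddMonoidAlgebra.coeff_injective
    refine Finsupp.ext fun n => ?_
    rw [Subsingleton.elim n 0]
    simp [coeff]
  rw [evalL, hp, AddMonoidAlgebra.coeff_single]
  rw [Finsupp.sum_single_index (by simp)]
  simp [coeff]

lemma lead_zero_dim (p : Laur 0) : lead p = coeff p 0 := rfl

lemma measurableSet_sublevel {d : ℕ} (p : Laur d) (lam : ℝ) :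
    MeasurableSet {z : Fin d → ℂ | (∀ i, Complex.abs (z i) = 1) ∧ Complex.abs (evalL p z) ≤ lam} := by
  rw [Set.setOf_and]
  apply MeasurableSet.inter
  · rw [Set.setOf_forall]
    apply MeasurableSet.iInter
    intro i
    exact (Complex.continuous_abs.measurable.comp (measurable_pi_apply i)) (measurableSet_singleton 1)
  · exact (Complex.continuous_abs.measurable.comp (measurable_evalL p)) measurableSet_Iic

lemma rpow_base_exp_mono {x y : ℝ} (hx0 : 0 ≤ x) (hxy : x ≤ y) (hy1 : y ≤ 1)
    {a b : ℕ} (ha : 1 ≤ a) (hab : a ≤ b) : x ^ ((a:ℝ)⁻¹) ≤ y ^ ((b:ℝ)⁻¹) := by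
  have h1 : x ^ ((a:ℝ)⁻¹) ≤ y ^ ((a:ℝ)⁻¹) := Real.rpow_le_rpow hx0 hxy (by positivity)
  refine h1.trans ?_
  rcases eq_or_lt_of_le (le_trans hx0 hxy) with hy0 | hy0
  · rw [← hy0]
    rw [Real.zero_rpow (by positivity), Real.zero_rpow (by norm_num; omega)]
  · apply Real.rpow_le_rpow_of_exponent_ge hy0 hy1
    have ha0 : (0:ℝ) < (a:ℝ) := by exact_mod_cast ha
    have hb0 : (0:ℝ) < (b:ℝ) := by exact_mod_cast (lt_of_lt_of_le ha hab : 0 < b)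
    apply inv_anti₀ ha0
    exact_mod_cast hab

lemma fiber_measure_le {d : ℕ} (p : Laur (d+1)) (z' : Fin d → ℂ) (lam : ℝ) (hlam : 0 ≤ lam)
    (W : ℕ) (hW : 1 ≤ W) (hw₀ : (topDeg p - botDeg p).toNat ≤ W)
    (hlamlt : lam < Complex.abs (evalL (qplus p) z')) :
    circleMeasure {z : ℂ | (∀ i, Complex.abs ((Fin.snoc z' z : Fin (d+1) → ℂ) i) = 1) ∧
        Complex.abs (evalL p (Fin.snoc z' z)) ≤ lam}
      ≤ ENNReal.ofReal (2 * W * (lam / Complex.abs (evalL (qplus p) z')) ^ ((W:ℝ)⁻¹)) := by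
  set q' : ℂ := evalL (qplus p) z' with hq'
  have hlamlt' : lam < Complex.abs q' := hlamlt
  have hq'0 : q' ≠ 0 := by
    intro h
    rw [h] at hlamlt'
    simp at hlamlt'
    linarith
  set w₀ : ℕ := (topDeg p - botDeg p).toNat with hw₀def
  set P : Polynomial ℂ := fiberPoly p z' with hP
  have hcoeff : P.coeff w₀ = q' := fiberPoly_coeff_top p z'
  have hsub : {z : ℂ | (∀ i, Complex.abs ((Fin.snoc z' z : Fin (d+1) → ℂ) i) = 1) ∧
      Complex.abs (evalL p (Fin.snoc z' z)) ≤ lam} ⊆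
      {z : ℂ | Complex.abs (Polynomial.eval z P) ≤ lam} := by
    intro z hz
    obtain ⟨htorus, habs⟩ := hz
    have hz1 : Complex.abs z = 1 := by
      have := htorus (Fin.last d)
      rwa [Fin.snoc_last] at this
    have hz0 : z ≠ 0 := by
      intro h; rw [h] at hz1; simp at hz1
    rw [Set.mem_setOf_eq]
    rw [evalL_snoc p z' z hz0] at habs
    rwa [map_mul, map_zpow₀, hz1, one_zpow, one_mul] at habs
  rcases Nat.eq_zero_or_pos w₀ with hw0 | hw0
  · -- constant case : the set is empty
    have hPdeg : P.natDegree = 0 := le_antisymm (hw0 ▸ fiberPoly_natDegree_le p z') (Nat.zero_le _)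
    have hPeval : ∀ z : ℂ, Polynomial.eval z P = q' := by
      intro z
      rw [Polynomial.eval_eq_sum_range, hPdeg]
      simp [← hcoeff, hw0]
    have hempty : {z : ℂ | Complex.abs (Polynomial.eval z P) ≤ lam} = ∅ := by
      ext z
      simp only [Set.mem_setOf_eq, Set.mem_empty_iff_false, iff_false, not_le, hPeval z]
      exact hlamlt
    refine le_trans (measure_mono hsub) ?_
    rw [hempty, measure_empty]
    exact zero_le
  · have hP0 : P ≠ 0 := fun h => hq'0 (by rw [← hcoeff, h]; simp)
    have hPdeg : P.natDegree = w₀ := le_antisymm (fiberPoly_natDegree_le p z')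
      (Polynomial.le_natDegree_of_ne_zero (hcoeff ▸ hq'0))
    have hPlead : P.leadingCoeff = q' := by
      rw [Polynomial.leadingCoeff, hPdeg, hcoeff]
    calc circleMeasure {z : ℂ | (∀ i, Complex.abs ((Fin.snoc z' z : Fin (d+1) → ℂ) i) = 1) ∧
          Complex.abs (evalL p (Fin.snoc z' z)) ≤ lam}
        ≤ circleMeasure {z : ℂ | Complex.abs (Polynomial.eval z P) ≤ lam} := measure_mono hsub
      _ ≤ ENNReal.ofReal (2 * P.natDegree *
            (lam / Complex.abs P.leadingCoeff) ^ ((P.natDegree : ℝ)⁻¹)) :=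
          onevar P hP0 (hPdeg ▸ hw0) lam hlam
      _ ≤ ENNReal.ofReal (2 * W * (lam / Complex.abs q') ^ ((W:ℝ)⁻¹)) := by
          apply ENNReal.ofReal_le_ofReal
          rw [hPdeg, hPlead]
          have habs0 : 0 < Complex.abs q' := lt_of_le_of_lt hlam hlamlt'
          have hbase : lam / Complex.abs q' ≤ 1 := by
            rw [div_le_one habs0]; exact hlamlt'.le
          have h1 : (lam / Complex.abs q') ^ ((w₀:ℝ)⁻¹) ≤ (lam / Complex.abs q') ^ ((W:ℝ)⁻¹) :=
            rpow_base_exp_mono (by positivity) le_rfl hbase hw0 hw₀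
          have h2 : (0:ℝ) ≤ (lam / Complex.abs q') ^ ((W:ℝ)⁻¹) := by positivity
          have hWn : (w₀:ℝ) ≤ (W:ℝ) := by exact_mod_cast hw₀
          nlinarith [Real.rpow_nonneg (show (0:ℝ) ≤ lam / Complex.abs q' by positivity) ((w₀:ℝ)⁻¹)]
end MainProof

lemma main_claim : ∀ (d : ℕ) (p : Laur d), p ≠ 0 → ∀ (W : ℕ), 1 ≤ W → wd p ≤ (W:ℤ) →
    ∀ lam : ℝ, 0 ≤ lam → lam < Complex.abs (lead p) →
    torusMeasure d {z | (∀ i, Complex.abs (z i) = 1) ∧ Complex.abs (evalL p z) ≤ lam} ≤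
      ENNReal.ofReal (2 * d * W * (lam / Complex.abs (lead p)) ^ (((d:ℝ) * W)⁻¹)) := by
  intro d
  induction d with
  | zero =>
    intro p hp W hW hwd lam hlam hlt
    have hempty : {z : Fin 0 → ℂ | (∀ i, Complex.abs (z i) = 1) ∧
        Complex.abs (evalL p z) ≤ lam} = ∅ := by
      ext z
      simp only [Set.mem_setOf_eq, Set.mem_empty_iff_false, iff_false, not_and, not_le]
      intro _
      rw [evalL_zero_dim, ← lead_zero_dim]
      exact hlt
    rw [hempty, measure_empty]
    exact zero_le
  | succ d ih =>
    intro p hp W hW hwd lam hlam hlt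
    have hq0 : qplus p ≠ 0 := qplus_ne_zero p hp
    have hlead : lead p = lead (qplus p) := rfl
    set c : ℝ := Complex.abs (lead p) with hc
    have hc0 : 0 < c := lt_of_le_of_lt hlam hlt
    set w₀ : ℕ := (topDeg p - botDeg p).toNat with hw₀def
    have hw₀W : w₀ ≤ W := by
      have h1 : topDeg p - botDeg p ≤ (W:ℤ) := le_trans (topDeg_sub_botDeg_le_wd p) hwd
      omega
    have hwdq : wd (qplus p) ≤ (W:ℤ) := le_trans (wd_qplus_le p) hwd
    set S : Set (Fin (d+1) → ℂ) :=
      {z | (∀ i, Complex.abs (z i) = 1) ∧ Complex.abs (evalL p z) ≤ lam} with hS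
    have hSm : MeasurableSet S := measurableSet_sublevel p lam
    rw [torus_succ_apply S hSm]
    have hfibereq : ∀ z' : Fin d → ℂ, {z : ℂ | Fin.snoc z' z ∈ S}
        = {z : ℂ | (∀ i, Complex.abs ((Fin.snoc z' z : Fin (d+1) → ℂ) i) = 1) ∧
            Complex.abs (evalL p (Fin.snoc z' z)) ≤ lam} := fun z' => rfl
    rcases Nat.eq_zero_or_pos d with hd0 | hd1
    · -- base case : d = 0
      subst hd0
      have hbound : ∀ z' : Fin 0 → ℂ, circleMeasure {z : ℂ | Fin.snoc z' z ∈ S}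
          ≤ ENNReal.ofReal (2 * W * (lam / c) ^ ((W:ℝ)⁻¹)) := by
        intro z'
        rw [hfibereq z']
        have hq' : evalL (qplus p) z' = lead p := by
          rw [evalL_zero_dim, ← lead_zero_dim, hlead]
        have := fiber_measure_le p z' lam hlam W hW hw₀W (by rw [hq']; exact hlt)
        rwa [hq'] at this
      calc ∫⁻ z', circleMeasure {z : ℂ | Fin.snoc z' z ∈ S} ∂ torusMeasure 0
          ≤ ∫⁻ _, ENNReal.ofReal (2 * W * (lam / c) ^ ((W:ℝ)⁻¹)) ∂ torusMeasure 0 :=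
            lintegral_mono hbound
        _ = ENNReal.ofReal (2 * W * (lam / c) ^ ((W:ℝ)⁻¹)) := by
            rw [lintegral_const, measure_univ, mul_one]
        _ ≤ ENNReal.ofReal (2 * (0+1 : ℕ) * W * (lam / c) ^ ((((0:ℕ):ℝ)+1) * W)⁻¹) := by
            apply ENNReal.ofReal_le_ofReal
            norm_num
        _ = ENNReal.ofReal (2 * ((0+1 : ℕ):ℝ) * W * (lam / c) ^ ((((0+1:ℕ)):ℝ) * W)⁻¹) := by
            norm_num
    · -- inductive case : d ≥ 1
      have hd1' : (1:ℝ) ≤ (d:ℝ) := by exact_mod_cast hd1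
      set θ : ℝ := (d:ℝ) / ((d:ℝ)+1) with hθ
      have hθ0 : 0 < θ := by positivity
      have hθ1 : θ < 1 := by
        rw [hθ, div_lt_one (by positivity)]; linarith
      set t : ℝ := lam ^ θ * c ^ (1-θ) with ht
      have ht0 : 0 ≤ t := by positivity
      have hlamt : lam ≤ t := by
        rcases eq_or_lt_of_le hlam with h0 | h0
        · rw [← h0]; exact ht0
        · have : lam = lam ^ θ * lam ^ (1-θ) := by
            rw [← Real.rpow_add h0]; norm_num
          rw [this, ht]
          apply mul_le_mul_of_nonneg_left _ (by positivity)
          exact Real.rpow_le_rpow hlam hlt.le (by linarith)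
      have htc : t < c := by
        have h1 : lam ^ θ < c ^ θ := Real.rpow_lt_rpow hlam hlt hθ0
        have h2 : t < c ^ θ * c ^ (1-θ) := by
          rw [ht]
          apply mul_lt_mul_of_pos_right h1 (by positivity)
        rwa [← Real.rpow_add hc0, add_sub_cancel, Real.rpow_one] at h2
      set A : Set (Fin d → ℂ) :=
        {z' | (∀ i, Complex.abs (z' i) = 1) ∧ Complex.abs (evalL (qplus p) z') ≤ t} with hA
      have hAm : MeasurableSet A := measurableSet_sublevel (qplus p) t
      have hIH : torusMeasure d A ≤
          ENNReal.ofReal (2 * d * W * (t / c) ^ (((d:ℝ) * W)⁻¹)) := by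
        have := ih (qplus p) hq0 W hW hwdq t ht0 (by rw [← hlead]; exact htc)
        rwa [← hlead] at this
      have hfiber : ∀ z' : Fin d → ℂ, circleMeasure {z : ℂ | Fin.snoc z' z ∈ S}
          ≤ A.indicator (1 : (Fin d → ℂ) → ENNReal) z' + ENNReal.ofReal (2 * W * (lam / t) ^ ((W:ℝ)⁻¹)) := by
        intro z'
        by_cases hzA : z' ∈ A
        · rw [Set.indicator_of_mem hzA]
          exact le_trans prob_le_one (self_le_add_right _ _)
        · rw [Set.indicator_of_notMem hzA, zero_add]
          rw [hA, Set.mem_setOf_eq, not_and_or] at hzA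
          rcases hzA with htor | habs
          · push_neg at htor
            obtain ⟨i, hi⟩ := htor
            have : {z : ℂ | Fin.snoc z' z ∈ S} = ∅ := by
              ext z
              rw [hfibereq z']
              simp only [Set.mem_setOf_eq, Set.mem_empty_iff_false, iff_false, not_and]
              intro htorus
              exfalso
              apply hi
              have := htorus (Fin.castSucc i)
              rwa [Fin.snoc_castSucc] at this
            rw [this, measure_empty]
            exact zero_le
          · push_neg at habs
            have hlamq : lam < Complex.abs (evalL (qplus p) z') := lt_of_le_of_lt hlamt habs
            have hfm := fiber_measure_le p z' lam hlam W hW hw₀W hlamq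
            rw [← hfibereq z'] at hfm
            refine le_trans hfm ?_
            apply ENNReal.ofReal_le_ofReal
            have hWpos : (0:ℝ) < (W:ℝ) := by exact_mod_cast hW
            rcases eq_or_lt_of_le ht0 with ht0' | ht0'
            · have hlam0 : lam = 0 := le_antisymm (ht0' ▸ hlamt) hlam
              rw [hlam0]
              simp
            · have h1 : lam / Complex.abs (evalL (qplus p) z') ≤ lam / t :=
                div_le_div_of_nonneg_left hlam ht0' habs.le
              have h2 : (lam / Complex.abs (evalL (qplus p) z')) ^ ((W:ℝ)⁻¹)
                  ≤ (lam / t) ^ ((W:ℝ)⁻¹) :=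
                Real.rpow_le_rpow (by positivity) h1 (by positivity)
              nlinarith
      calc ∫⁻ z', circleMeasure {z : ℂ | Fin.snoc z' z ∈ S} ∂ torusMeasure d
          ≤ ∫⁻ z', (A.indicator (1 : (Fin d → ℂ) → ENNReal) z'
              + ENNReal.ofReal (2 * W * (lam / t) ^ ((W:ℝ)⁻¹))) ∂ torusMeasure d :=
            lintegral_mono hfiber
        _ = torusMeasure d A + ENNReal.ofReal (2 * W * (lam / t) ^ ((W:ℝ)⁻¹)) := by
            rw [lintegral_add_right _ measurable_const, lintegral_indicator_one hAm,
              lintegral_const, measure_univ, mul_one]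
        _ ≤ ENNReal.ofReal (2 * d * W * (t / c) ^ (((d:ℝ) * W)⁻¹))
              + ENNReal.ofReal (2 * W * (lam / t) ^ ((W:ℝ)⁻¹)) := by
            gcongr
        _ = ENNReal.ofReal (2 * ((d:ℝ)+1) * W * (lam / c) ^ ((((d:ℝ)+1) * W)⁻¹)) := by
            have hWpos : (0:ℝ) < (W:ℝ) := by exact_mod_cast hW
            have hdpos : (0:ℝ) < (d:ℝ) := by exact_mod_cast hd1
            have hWne : (W:ℝ) ≠ 0 := ne_of_gt hWpos
            have hdne : (d:ℝ) ≠ 0 := ne_of_gt hdpos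
            have hd1ne : (d:ℝ) + 1 ≠ 0 := by positivity
            have hW0 : ((W:ℝ))⁻¹ ≠ 0 := ne_of_gt (inv_pos.2 hWpos)
            have hdW0 : ((((d:ℝ)+1) * W)⁻¹) ≠ 0 :=
              ne_of_gt (inv_pos.2 (mul_pos (by positivity) hWpos))
            have hdWa : (((d:ℝ) * W)⁻¹) ≠ 0 := ne_of_gt (inv_pos.2 (mul_pos hdpos hWpos))
            have heq1 : (t / c) ^ (((d:ℝ) * W)⁻¹) = (lam / c) ^ ((((d:ℝ)+1) * W)⁻¹) := by
              rcases eq_or_lt_of_le hlam with h0 | h0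
              · rw [← h0]
                have ht00 : t = 0 := by
                  rw [ht, ← h0, Real.zero_rpow (ne_of_gt hθ0), zero_mul]
                rw [ht00, zero_div, Real.zero_rpow hdWa, Real.zero_rpow hdW0]
              · have htco : t / c = (lam / c) ^ θ := by
                  have hcθ : (0:ℝ) < c ^ θ := Real.rpow_pos_of_pos hc0 θ
                  rw [Real.div_rpow hlam hc0.le, ht]
                  rw [div_eq_div_iff hc0.ne' hcθ.ne']
                  rw [mul_assoc, ← Real.rpow_add hc0]
                  rw [show (1-θ)+θ = 1 by ring, Real.rpow_one]
                rw [htco, ← Real.rpow_mul (by positivity)]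
                congr 1
                rw [hθ]
                field_simp
                try ring
            have heq2 : (lam / t) ^ ((W:ℝ)⁻¹) = (lam / c) ^ ((((d:ℝ)+1) * W)⁻¹) := by
              rcases eq_or_lt_of_le hlam with h0 | h0
              · have ht00 : t = 0 := by
                  rw [ht, ← h0, Real.zero_rpow (ne_of_gt hθ0), zero_mul]
                rw [← h0, ht00, zero_div, zero_div, Real.zero_rpow hW0, Real.zero_rpow hdW0]
              · have hlamtθ : lam / t = (lam / c) ^ (1-θ) := by
                  have htpos : 0 < t := by
                    rw [ht]
                    exact mul_pos (Real.rpow_pos_of_pos h0 θ) (Real.rpow_pos_of_pos hc0 _)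
                  rw [Real.div_rpow h0.le hc0.le, ht]
                  rw [div_eq_div_iff htpos.ne' (Real.rpow_pos_of_pos hc0 (1-θ)).ne']
                  have hl : lam ^ (1-θ) * lam ^ θ = lam := by
                    rw [← Real.rpow_add h0, show (1-θ)+θ = 1 by ring, Real.rpow_one]
                  calc lam * c ^ (1-θ) = (lam ^ (1-θ) * lam ^ θ) * c ^ (1-θ) := by rw [hl]
                    _ = lam ^ (1-θ) * (lam ^ θ * c ^ (1-θ)) := by ring
                rw [hlamtθ, ← Real.rpow_mul (by positivity)]
                congr 1
                rw [hθ]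
                field_simp
                try ring
            rw [heq1, heq2, ← ENNReal.ofReal_add (by positivity) (by positivity)]
            congr 1
            push_cast
            ring
        _ = ENNReal.ofReal (2 * ((d+1 : ℕ) : ℝ) * (W:ℝ) *
              (lam / c) ^ ((((d+1:ℕ)) : ℝ) * (W:ℝ))⁻¹) := by
            push_cast
            ring_nf



/-- For a nonzero Laurent polynomial `p ∈ ℂ[z₁^{±1},…,z_d^{±1}]` with `wd(p) ≥ 1`
and all `λ ≥ 0`:
`μ_{T^d}({z ∈ T^d : |p(z)| ≤ λ}) ≤ (8√3/√47)·d·wd(p)·(λ/|lead(p)|)^{1/(d·wd(p))}`. -/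
theorem measure_sublevel_le (d : ℕ) (hd : 1 ≤ d) (p : Laur d) (hp : p ≠ 0)
    (hwd : 1 ≤ wd p) (lam : ℝ) (hlam : 0 ≤ lam) :
    torusMeasure d {z | (∀ i, ‖z i‖ = 1) ∧ ‖evalL p z‖ ≤ lam} ≤
      ENNReal.ofReal (8 * Real.sqrt 3 / Real.sqrt 47 * d * (wd p : ℝ) *
        ((lam / ‖lead p‖) ^ (((d : ℝ) * (wd p : ℝ))⁻¹))) := by
  set W : ℕ := (wd p).toNat with hWdef
  have hWwd : ((W:ℤ)) = wd p := Int.toNat_of_nonneg (by omega)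
  have hW1 : 1 ≤ W := by omega
  have hWreal : ((wd p : ℝ)) = (W:ℝ) := by exact_mod_cast congrArg (Int.cast : ℤ → ℝ) hWwd.symm
  set c : ℝ := ‖lead p‖ with hcdef
  have hc0 : 0 < c := norm_pos_iff.2 (lead_ne_zero p hp)
  have hκ : 2 ≤ 8 * Real.sqrt 3 / Real.sqrt 47 := by
    rw [le_div_iff₀ (Real.sqrt_pos.2 (by norm_num))]
    nlinarith [Real.sq_sqrt (show (0:ℝ) ≤ 3 by norm_num),
      Real.sq_sqrt (show (0:ℝ) ≤ 47 by norm_num),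
      Real.sqrt_nonneg 3, Real.sqrt_nonneg 47]
  have hd1 : (1:ℝ) ≤ (d:ℝ) := by exact_mod_cast hd
  have hW1' : (1:ℝ) ≤ (W:ℝ) := by exact_mod_cast hW1
  rcases lt_or_ge lam c with hlt | hge
  · refine le_trans (main_claim d p hp W hW1 (le_of_eq hWwd.symm) lam hlam hlt) ?_
    apply ENNReal.ofReal_le_ofReal
    rw [Complex.abs_apply, ← hcdef]
    rw [hWreal]
    have hx : 0 ≤ (lam / c) ^ (((d:ℝ) * (W:ℝ))⁻¹) := Real.rpow_nonneg (by positivity) _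
    have hprod : 0 ≤ (d:ℝ) * (W:ℝ) * ((lam / c) ^ (((d:ℝ) * (W:ℝ))⁻¹)) :=
      mul_nonneg (mul_nonneg (by linarith) (by linarith)) hx
    nlinarith [mul_nonneg (sub_nonneg.2 hκ) hprod]
  · calc torusMeasure d {z | (∀ i, Complex.abs (z i) = 1) ∧ Complex.abs (evalL p z) ≤ lam}
        ≤ 1 := prob_le_one
      _ ≤ ENNReal.ofReal (8 * Real.sqrt 3 / Real.sqrt 47 * d * (wd p : ℝ) *
            ((lam / c) ^ (((d : ℝ) * (wd p : ℝ))⁻¹))) := by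
          rw [ENNReal.one_le_ofReal]
          have hx1 : 1 ≤ (lam / c) ^ (((d:ℝ) * (wd p : ℝ))⁻¹) :=
            Real.one_le_rpow ((one_le_div hc0).2 hge) (by rw [hWreal]; positivity)
          rw [hWreal] at hx1 ⊢
          have hk0 : (0:ℝ) ≤ 8 * Real.sqrt 3 / Real.sqrt 47 := by positivity
          have h2 : (1:ℝ) ≤ 8 * Real.sqrt 3 / Real.sqrt 47 * (d:ℝ) := by nlinarith
          have h3 : (1:ℝ) ≤ 8 * Real.sqrt 3 / Real.sqrt 47 * (d:ℝ) * (W:ℝ) := by nlinarith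
          nlinarith [hx1, h3]
end
end

section
/- For every complex number a and every λ ≥ 0, the normalized Haar measure of {z ∈ S¹ : |z − a| ≤ λ} is at most (8·√3/√47)·λ. -/
open MeasureTheory Real Filter

noncomputable section

lemma aux_abs_exp_sub (t : ℝ) :
    ‖Complex.exp (2 * Real.pi * Complex.I * t) - 1‖ = 2 * |Real.sin (π * t)| := by
  have h1 : (2 * Real.pi * Complex.I * t) = ((2 * π * t : ℝ) : ℂ) * Complex.I := by
    push_cast; ring
  rw [h1, Complex.exp_mul_I, ← Complex.ofReal_cos, ← Complex.ofReal_sin]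
  have h2 : (↑(Real.cos (2*π*t)) + ↑(Real.sin (2*π*t)) * Complex.I - 1 : ℂ)
      = ((Real.cos (2*π*t) - 1 : ℝ) : ℂ) + ((Real.sin (2*π*t) : ℝ) : ℂ) * Complex.I := by
    push_cast; ring
  rw [h2, Complex.norm_add_mul_I]
  have h3 : π * t = (2*π*t)/2 := by ring
  rw [h3, Real.abs_sin_half]
  rw [show (2:ℝ) * Real.sqrt ((1 - Real.cos (2*π*t))/2)
      = Real.sqrt 4 * Real.sqrt ((1 - Real.cos (2*π*t))/2) by
    rw [show Real.sqrt 4 = 2 by rw [show (4:ℝ) = 2^2 by norm_num, Real.sqrt_sq]; norm_num]]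
  rw [← Real.sqrt_mul (by norm_num)]
  congr 1
  have := Real.sin_sq_add_cos_sq (2*π*t)
  nlinarith [this]

lemma aux_trichotomy {t lam : ℝ} (h1 : -1 < t) (h2 : t < 1)
    (hs : |Real.sin (π * t)| ≤ lam) :
    |t| ≤ lam / 2 ∨ 1 - lam / 2 ≤ t ∨ t ≤ -1 + lam / 2 := by
  by_contra hcon
  push_neg at hcon
  obtain ⟨ha, hb, hc⟩ := hcon
  have hlam0 : 0 ≤ lam := le_trans (abs_nonneg _) hs
  have habs1 : |t| < 1 - lam/2 := by
    rw [abs_lt]; constructor <;> nlinarith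
  have hkey : |Real.sin (π * t)| = Real.sin (π * |t|) := by
    rcases le_or_gt 0 t with h | h
    · rw [abs_of_nonneg h, abs_of_nonneg]
      exact Real.sin_nonneg_of_nonneg_of_le_pi (by positivity) (by nlinarith [Real.pi_pos])
    · have hneg : Real.sin (π * t) ≤ 0 := by
        have h0 : Real.sin (π * (-t)) ≥ 0 :=
          Real.sin_nonneg_of_nonneg_of_le_pi (by nlinarith [Real.pi_pos]) (by nlinarith [Real.pi_pos])
        rw [mul_neg, Real.sin_neg] at h0; linarith
      rw [abs_of_neg h, abs_of_nonpos hneg, mul_neg, Real.sin_neg]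
  rw [hkey] at hs
  set s := |t| with hsdef
  have hs0 : 0 ≤ s := abs_nonneg t
  rcases le_or_gt s (1/2) with hhalf | hhalf
  · have := Real.mul_le_sin (x := π * s) (by positivity) (by nlinarith [Real.pi_pos])
    have h2s : 2 * s ≤ Real.sin (π * s) := by
      have hpi := Real.pi_pos
      calc 2 * s = 2 / π * (π * s) := by field_simp
        _ ≤ Real.sin (π * s) := this
    nlinarith
  · have hs1 : 1 - s ≤ 1/2 := by linarith
    have hs2 : lam/2 < 1 - s := by linarith
    have heq : Real.sin (π * s) = Real.sin (π * (1 - s)) := by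
      rw [show π * (1 - s) = π - π * s by ring, Real.sin_pi_sub]
    have := Real.mul_le_sin (x := π * (1 - s)) (by nlinarith [Real.pi_pos]) (by nlinarith [Real.pi_pos])
    have h2s : 2 * (1 - s) ≤ Real.sin (π * (1 - s)) := by
      have hpi := Real.pi_pos
      calc 2 * (1 - s) = 2 / π * (π * (1 - s)) := by field_simp
        _ ≤ Real.sin (π * (1 - s)) := this
    rw [heq] at hs
    nlinarith

lemma aux_const : (2:ℝ) ≤ 8 * Real.sqrt 3 / Real.sqrt 47 := by
  rw [le_div_iff₀ (by positivity : (0:ℝ) < Real.sqrt 47)]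
  nlinarith [Real.sq_sqrt (by norm_num : (3:ℝ) ≥ 0), Real.sq_sqrt (by norm_num : (47:ℝ) ≥ 0),
    Real.sqrt_nonneg 3, Real.sqrt_nonneg 47, sq_nonneg (8 * Real.sqrt 3 - 2 * Real.sqrt 47)]

/-- For every `a ∈ ℂ` and `λ ≥ 0`, the normalized Haar measure of
`{z ∈ S¹ : |z − a| ≤ λ}` is at most `(8√3/√47)·λ`. -/
theorem measure_ball_inter_circle_le (a : ℂ) (lam : ℝ) (hlam : 0 ≤ lam) :
    circleMeasure {z : ℂ | ‖z‖ = 1 ∧ ‖z - a‖ ≤ lam} ≤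
      ENNReal.ofReal (8 * Real.sqrt 3 / Real.sqrt 47 * lam) := by
  set S : Set ℂ := {z : ℂ | ‖z‖ = 1 ∧ ‖z - a‖ ≤ lam} with hSdef
  set f : ℝ → ℂ := fun x : ℝ => Complex.exp (2 * Real.pi * Complex.I * x) with hfdef
  have hfc : Continuous f :=
    Complex.continuous_exp.comp (continuous_const.mul Complex.continuous_ofReal)
  have hS : MeasurableSet S := by
    have : S = {z : ℂ | ‖z‖ = 1} ∩ {z : ℂ | ‖z - a‖ ≤ lam} := rfl
    rw [this]
    exact ((isClosed_eq continuous_norm continuous_const).measurableSet).inter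
      ((isClosed_le (continuous_norm.comp (continuous_id.sub continuous_const))
        continuous_const).measurableSet)
  rcases le_or_gt (1/2 : ℝ) lam with hl | hl
  · calc circleMeasure S ≤ 1 := prob_le_one
      _ ≤ ENNReal.ofReal (8 * Real.sqrt 3 / Real.sqrt 47 * lam) := by
        rw [ENNReal.one_le_ofReal]
        nlinarith [aux_const]
  · have hmap : circleMeasure S = volume (f ⁻¹' S ∩ Set.Ioc 0 1) := by
      rw [circleMeasure, Measure.map_apply hfc.measurable hS,
        Measure.restrict_apply (hfc.measurable hS)]
    rw [hmap]
    rcases Set.eq_empty_or_nonempty (f ⁻¹' S ∩ Set.Ioc 0 1) with hne | ⟨x₀, hx₀S, hx₀I⟩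
    · simp [hne]
    · -- containment in three intervals
      have hsub : f ⁻¹' S ∩ Set.Ioc 0 1 ⊆
          Set.Icc (x₀ - lam/2) (x₀ + lam/2) ∪ Set.Icc (x₀ + 1 - lam/2) (x₀ + 1) ∪
            Set.Icc (x₀ - 1) (x₀ - 1 + lam/2) := by
        rintro x ⟨hxS, hxI⟩
        have hdist : ‖f x - f x₀‖ ≤ 2 * lam := by
          calc ‖f x - f x₀‖
              = ‖(f x - a) - (f x₀ - a)‖ := by ring_nf
            _ ≤ ‖f x - a‖ + ‖f x₀ - a‖ := by
                simpa using norm_sub_le (f x - a) (f x₀ - a)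
            _ ≤ lam + lam := add_le_add hxS.2 hx₀S.2
            _ = 2 * lam := by ring
        have hfactor : ‖f x - f x₀‖
            = ‖Complex.exp (2 * Real.pi * Complex.I * ((x - x₀ : ℝ) : ℂ)) - 1‖ := by
          have : f x - f x₀ = f x₀ * (Complex.exp (2 * Real.pi * Complex.I * ((x - x₀ : ℝ) : ℂ)) - 1) := by
            rw [hfdef]
            simp only []
            rw [mul_sub, mul_one, ← Complex.exp_add]
            congr 2
            push_cast; ring
          rw [this, norm_mul]
          have : ‖f x₀‖ = 1 := hx₀S.1
          rw [this, one_mul]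
        have hsin : |Real.sin (π * (x - x₀))| ≤ lam := by
          have := aux_abs_exp_sub (x - x₀)
          rw [hfactor, this] at hdist
          linarith
        have ht1 : -1 < x - x₀ := by
          have := hxI.1; have := hx₀I.2; simp only [Set.mem_Ioc] at *; linarith
        have ht2 : x - x₀ < 1 := by
          have := hxI.2; have := hx₀I.1; simp only [Set.mem_Ioc] at *; linarith
        rcases aux_trichotomy ht1 ht2 hsin with h | h | h
        · left; left
          rw [abs_le] at h
          exact ⟨by linarith [h.1], by linarith [h.2]⟩
        · left; right
          exact ⟨by linarith, by linarith⟩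
        · right
          exact ⟨by linarith, by linarith⟩
      calc volume (f ⁻¹' S ∩ Set.Ioc 0 1)
          ≤ volume (Set.Icc (x₀ - lam/2) (x₀ + lam/2) ∪ Set.Icc (x₀ + 1 - lam/2) (x₀ + 1) ∪
              Set.Icc (x₀ - 1) (x₀ - 1 + lam/2)) := measure_mono hsub
        _ ≤ volume (Set.Icc (x₀ - lam/2) (x₀ + lam/2)) +
              volume (Set.Icc (x₀ + 1 - lam/2) (x₀ + 1)) +
              volume (Set.Icc (x₀ - 1) (x₀ - 1 + lam/2)) := by
            refine le_trans (measure_union_le _ _) ?_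
            exact add_le_add (measure_union_le _ _) le_rfl
        _ = ENNReal.ofReal lam + ENNReal.ofReal (lam/2) + ENNReal.ofReal (lam/2) := by
            rw [Real.volume_Icc, Real.volume_Icc, Real.volume_Icc]
            congr 1
            · congr 1 <;> [skip; ring_nf]
              congr 1; ring
            · congr 1; ring
        _ = ENNReal.ofReal (2 * lam) := by
            rw [← ENNReal.ofReal_add (by positivity) (by positivity),
              ← ENNReal.ofReal_add (by positivity) (by positivity)]
            congr 1; ring
        _ ≤ ENNReal.ofReal (8 * Real.sqrt 3 / Real.sqrt 47 * lam) := by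
            apply ENNReal.ofReal_le_ofReal
            nlinarith [aux_const]
end
end

section
/- Let r ≥ 1 and let a₁,…,a_r be complex numbers. Then for all λ ≥ 0, the normalized Haar measure of {z ∈ S¹ : |∏_{i=1}^r (z − a_i)| ≤ λ} is at most (8·√3/√47) · r · λ^{1/r}. -/
open MeasureTheory Real Filter

noncomputable section

lemma chord_eq (x y : ℝ) :
    ‖Complex.exp (2 * Real.pi * Complex.I * x) -
        Complex.exp (2 * Real.pi * Complex.I * y)‖ = 2 * |Real.sin (Real.pi * (x - y))| := by
  set A : ℂ := ((Real.pi * (x + y) : ℝ) : ℂ)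
  set B : ℂ := ((Real.pi * (x - y) : ℝ) : ℂ)
  have e1 : Complex.exp (2 * Real.pi * Complex.I * x) =
      Complex.exp (A * Complex.I) * Complex.exp (B * Complex.I) := by
    rw [← Complex.exp_add]
    congr 1
    simp only [A, B]
    push_cast
    ring
  have e2 : Complex.exp (2 * Real.pi * Complex.I * y) =
      Complex.exp (A * Complex.I) * Complex.exp ((-B) * Complex.I) := by
    rw [← Complex.exp_add]
    congr 1
    simp only [A, B]
    push_cast
    ring
  have key : Complex.exp (2 * Real.pi * Complex.I * x) -
      Complex.exp (2 * Real.pi * Complex.I * y) =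
      Complex.exp (A * Complex.I) * (2 * Complex.sin B * Complex.I) := by
    rw [e1, e2]
    simp only [Complex.exp_mul_I, Complex.cos_neg, Complex.sin_neg]
    ring
  rw [key, norm_mul, Complex.norm_exp_ofReal_mul_I, one_mul, norm_mul, norm_mul, Complex.norm_I,
    mul_one, Complex.norm_two]
  congr 1
  rw [show B = ((Real.pi * (x - y) : ℝ) : ℂ) from rfl, ← Complex.ofReal_sin, Complex.norm_real, Real.norm_eq_abs]

lemma dist_round_le_of_sin {d t : ℝ} (h : |Real.sin (Real.pi * d)| ≤ t) :
    |d - round d| ≤ t / 2 := by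
  set v : ℝ := d - round d with hv
  have hv2 : |v| ≤ 1 / 2 := abs_sub_round d
  have hper : |Real.sin (Real.pi * v)| = |Real.sin (Real.pi * d)| := by
    have : Real.pi * d = Real.pi * v + (round d : ℤ) * Real.pi := by rw [hv]; ring
    have hone : |((-1 : ℝ)) ^ (round d : ℤ)| = 1 := by
      rcases Int.even_or_odd (round d) with he | ho
      · rw [he.neg_one_zpow, abs_one]
      · rw [Odd.neg_one_zpow ho, abs_neg, abs_one]
    rw [this, Real.sin_add_int_mul_pi, abs_mul, hone, one_mul]
  have hjordan : 2 / Real.pi * |Real.pi * v| ≤ |Real.sin (Real.pi * v)| := by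
    apply Real.mul_abs_le_abs_sin
    rw [abs_mul, abs_of_pos Real.pi_pos]
    calc Real.pi * |v| ≤ Real.pi * (1 / 2) := by
          exact mul_le_mul_of_nonneg_left hv2 Real.pi_pos.le
      _ = Real.pi / 2 := by ring
  have h2 : 2 / Real.pi * |Real.pi * v| = 2 * |v| := by
    rw [abs_mul, abs_of_pos Real.pi_pos]
    field_simp
  rw [h2, hper] at hjordan
  linarith [hjordan.trans h]

lemma key_measure (a : ℂ) (t : ℝ) (ht : 0 ≤ t) :
    volume {x : ℝ | x ∈ Set.Ioc (0:ℝ) 1 ∧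
        ‖Complex.exp (2 * Real.pi * Complex.I * x) - a‖ ≤ t} ≤
      ENNReal.ofReal (2 * t) := by
  set S := {x : ℝ | x ∈ Set.Ioc (0:ℝ) 1 ∧
    ‖Complex.exp (2 * Real.pi * Complex.I * x) - a‖ ≤ t} with hS
  rcases Set.eq_empty_or_nonempty S with h | ⟨x₀, hx₀mem, hx₀⟩
  · simp [h]
  · have hx₀0 : 0 < x₀ := hx₀mem.1
    have hx₀1 : x₀ ≤ 1 := hx₀mem.2
    have hsub : S ⊆ Set.Icc (x₀ - t/2) (x₀ + t/2) ∪ Set.Icc (x₀ + 1 - t/2) 1 ∪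
        Set.Icc 0 (x₀ - 1 + t/2) := by
      rintro x ⟨⟨hx0, hx1⟩, hx⟩
      have chord : ‖Complex.exp (2 * Real.pi * Complex.I * x) -
          Complex.exp (2 * Real.pi * Complex.I * x₀)‖ ≤ 2 * t := by
        calc ‖Complex.exp (2 * Real.pi * Complex.I * x) -
              Complex.exp (2 * Real.pi * Complex.I * x₀)‖
            ≤ ‖Complex.exp (2 * Real.pi * Complex.I * x) - a‖ +
              ‖a - Complex.exp (2 * Real.pi * Complex.I * x₀)‖ := by
              have := norm_sub_le_norm_sub_add_norm_sub (Complex.exp (2 * Real.pi * Complex.I * x)) a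
                (Complex.exp (2 * Real.pi * Complex.I * x₀))
              simpa using this
          _ ≤ t + t := by
              have h2 : ‖a - Complex.exp (2 * Real.pi * Complex.I * x₀)‖ =
                  ‖Complex.exp (2 * Real.pi * Complex.I * x₀) - a‖ := by
                rw [← norm_neg]; congr 1; ring
              rw [h2]
              exact add_le_add hx hx₀
          _ = 2 * t := by ring
      rw [chord_eq] at chord
      have hsin : |Real.sin (Real.pi * (x - x₀))| ≤ t := by linarith
      have hvr := dist_round_le_of_sin hsin
      set n := round (x - x₀) with hn
      have hd1 : |x - x₀| < 1 := by rw [abs_lt]; constructor <;> linarith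
      have habs : |x - x₀ - n| ≤ 1/2 := abs_sub_round (x - x₀)
      have hnrange : |(n : ℝ)| < 3/2 := by
        calc |(n : ℝ)| = |(x - x₀) - ((x - x₀) - n)| := by ring_nf
          _ ≤ |x - x₀| + |(x - x₀) - n| := abs_sub _ _
          _ < 3/2 := by linarith
      have hncases : n = -1 ∨ n = 0 ∨ n = 1 := by
        have h1 : (n : ℝ) < 2 := lt_of_le_of_lt (le_abs_self _) (by linarith)
        have h2 : (-2 : ℝ) < (n : ℝ) := lt_of_lt_of_le (by linarith) (neg_abs_le _)
        have h1' : n < 2 := by exact_mod_cast h1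
        have h2' : -2 < n := by exact_mod_cast h2
        omega
      have hvr' := abs_le.mp hvr
      rcases hncases with h | h | h
      · rw [h] at hvr'
        push_cast at hvr'
        exact Set.mem_union_right _ ⟨le_of_lt hx0, by linarith [hvr'.2]⟩
      · rw [h] at hvr'
        push_cast at hvr'
        exact Set.mem_union_left _
          (Set.mem_union_left _ ⟨by linarith [hvr'.1], by linarith [hvr'.2]⟩)
      · rw [h] at hvr'
        push_cast at hvr'
        exact Set.mem_union_left _ (Set.mem_union_right _ ⟨by linarith [hvr'.1], hx1⟩)
    calc volume S ≤ volume (Set.Icc (x₀ - t/2) (x₀ + t/2) ∪ Set.Icc (x₀ + 1 - t/2) 1 ∪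
        Set.Icc 0 (x₀ - 1 + t/2)) := measure_mono hsub
      _ ≤ volume (Set.Icc (x₀ - t/2) (x₀ + t/2)) + volume (Set.Icc (x₀ + 1 - t/2) 1) +
          volume (Set.Icc 0 (x₀ - 1 + t/2)) :=
        le_trans (measure_union_le _ _) (by gcongr; exact measure_union_le _ _)
      _ ≤ ENNReal.ofReal t + ENNReal.ofReal (t/2) + ENNReal.ofReal (t/2) := by
          rw [Real.volume_Icc, Real.volume_Icc, Real.volume_Icc]
          exact add_le_add (add_le_add (ENNReal.ofReal_le_ofReal (by linarith))
            (ENNReal.ofReal_le_ofReal (by linarith))) (ENNReal.ofReal_le_ofReal (by linarith))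
      _ = ENNReal.ofReal (2 * t) := by
          rw [← ENNReal.ofReal_add ht (by linarith), ← ENNReal.ofReal_add (by linarith) (by linarith)]
          congr 1
          ring

/-- For `r ≥ 1`, complex numbers `a₁,…,a_r` and `λ ≥ 0`, the normalized Haar
measure of `{z ∈ S¹ : |∏ᵢ (z − aᵢ)| ≤ λ}` is at most `(8√3/√47)·r·λ^{1/r}`. -/
theorem measure_sublevel_prod_linear_le (r : ℕ) (hr : 1 ≤ r) (a : Fin r → ℂ)
    (lam : ℝ) (hlam : 0 ≤ lam) :
    circleMeasure {z : ℂ | ‖z‖ = 1 ∧ ‖∏ i, (z - a i)‖ ≤ lam} ≤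
      ENNReal.ofReal (8 * Real.sqrt 3 / Real.sqrt 47 * r * (lam ^ ((r : ℝ)⁻¹))) := by
  have hr0 : r ≠ 0 := by omega
  haveI : Nonempty (Fin r) := Fin.pos_iff_nonempty.mp (by omega)
  set t : ℝ := lam ^ ((r : ℝ)⁻¹) with htdef
  have ht : 0 ≤ t := Real.rpow_nonneg hlam _
  set S := {z : ℂ | ‖z‖ = 1 ∧ ‖∏ i, (z - a i)‖ ≤ lam} with hSdef
  have hmeas : MeasurableSet S := by
    have hcl : IsClosed S := by
      have : S = {z : ℂ | ‖z‖ = 1} ∩ {z : ℂ | ‖∏ i, (z - a i)‖ ≤ lam} := by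
        ext z; simp [hSdef]
      rw [this]
      exact (isClosed_eq continuous_norm continuous_const).inter
        (isClosed_le (continuous_norm.comp
          (continuous_finset_prod _ fun i _ => continuous_id.sub continuous_const))
          continuous_const)
    exact hcl.measurableSet
  have hfmeas : Measurable fun x : ℝ => Complex.exp (2 * Real.pi * Complex.I * x) :=
    (Complex.continuous_exp.comp (continuous_const.mul Complex.continuous_ofReal)).measurable
  have hmap : circleMeasure S =
      volume ((fun x : ℝ => Complex.exp (2 * Real.pi * Complex.I * x)) ⁻¹' S ∩
        Set.Ioc (0:ℝ) 1) := by
    rw [circleMeasure, Measure.map_apply hfmeas hmeas, Measure.restrict_apply (hfmeas hmeas)]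
  set T : Fin r → Set ℝ := fun i => {x : ℝ | x ∈ Set.Ioc (0:ℝ) 1 ∧
    ‖Complex.exp (2 * Real.pi * Complex.I * x) - a i‖ ≤ t} with hTdef
  have hsub : (fun x : ℝ => Complex.exp (2 * Real.pi * Complex.I * x)) ⁻¹' S ∩
      Set.Ioc (0:ℝ) 1 ⊆ ⋃ i, T i := by
    rintro x ⟨hxS, hxIoc⟩
    have hprod : ‖∏ i, (Complex.exp (2 * Real.pi * Complex.I * x) - a i)‖ ≤ lam :=
      hxS.2
    rw [norm_prod] at hprod
    obtain ⟨i, hi⟩ : ∃ i, ‖Complex.exp (2 * Real.pi * Complex.I * x) - a i‖ ≤ t := by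
      by_contra h
      push_neg at h
      rcases eq_or_lt_of_le hlam with hlam0 | hlampos
      · have ht0 : t = 0 := by
          rw [htdef, ← hlam0, Real.zero_rpow (by positivity)]
        have hpos : 0 < ∏ i, ‖Complex.exp (2 * Real.pi * Complex.I * x) - a i‖ :=
          Finset.prod_pos fun i _ => lt_of_le_of_lt (le_of_eq ht0.symm) (h i)
        rw [← hlam0] at hprod
        linarith
      · have htpos : 0 < t := Real.rpow_pos_of_pos hlampos _
        have hlt : ∏ _i : Fin r, t <
            ∏ i, ‖Complex.exp (2 * Real.pi * Complex.I * x) - a i‖ :=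
          Finset.prod_lt_prod_of_nonempty (fun _ _ => htpos) (fun i _ => h i)
            Finset.univ_nonempty
        rw [Finset.prod_const, Finset.card_univ, Fintype.card_fin] at hlt
        have : t ^ r = lam := Real.rpow_inv_natCast_pow hlam hr0
        linarith [hlt.trans_le hprod, this]
    exact Set.mem_iUnion.mpr ⟨i, hxIoc, hi⟩
  have hconst : (2 : ℝ) ≤ 8 * Real.sqrt 3 / Real.sqrt 47 := by
    have h47 : (0:ℝ) < Real.sqrt 47 := Real.sqrt_pos.mpr (by norm_num)
    rw [le_div_iff₀ h47]
    nlinarith [Real.sq_sqrt (show (0:ℝ) ≤ 3 by norm_num),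
      Real.sq_sqrt (show (0:ℝ) ≤ 47 by norm_num), Real.sqrt_nonneg 3, Real.sqrt_nonneg 47,
      mul_pos h47 (Real.sqrt_pos.mpr (show (0:ℝ) < 3 by norm_num))]
  calc circleMeasure S = volume ((fun x : ℝ => Complex.exp (2 * Real.pi * Complex.I * x)) ⁻¹' S ∩
        Set.Ioc (0:ℝ) 1) := hmap
    _ ≤ volume (⋃ i, T i) := measure_mono hsub
    _ ≤ ∑ i, volume (T i) := measure_iUnion_fintype_le volume T
    _ ≤ ∑ _i : Fin r, ENNReal.ofReal (2 * t) :=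
        Finset.sum_le_sum fun i _ => key_measure (a i) t ht
    _ = (r : ENNReal) * ENNReal.ofReal (2 * t) := by
        rw [Finset.sum_const, Finset.card_univ, Fintype.card_fin, nsmul_eq_mul]
    _ = ENNReal.ofReal ((r : ℝ) * (2 * t)) := by
        rw [ENNReal.ofReal_mul (Nat.cast_nonneg r), ENNReal.ofReal_mul (by norm_num : (0:ℝ) ≤ 2),
          ENNReal.ofReal_natCast, ENNReal.ofReal_ofNat]
    _ ≤ ENNReal.ofReal (8 * Real.sqrt 3 / Real.sqrt 47 * r * t) := by
        apply ENNReal.ofReal_le_ofReal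
        have hrnn : (0:ℝ) ≤ (r:ℝ) := Nat.cast_nonneg r
        nlinarith [mul_nonneg hrnn ht]
end
end
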